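/- Let v ∈ S¹, c > 0, and γ : I → ℝ² a C¹ curve with ⟨γ'(t),v⟩ ≥ c for all t ∈ I. Let (Σ_p)_{p≥0} be a filtration of sub-σ-algebras of the Borel σ-algebra on I, and let β_p := E[γ' | Σ_p] denote the conditional expectation of γ' given Σ_p with respect to Lebesgue measure ℒ on I. Define the probability measure μ^v on I by μ^v(A) := (∫_A ⟨γ'(t),v⟩ dt) / (∫_I ⟨γ'(t),v⟩ dt). Then ⟨β_p(t),v⟩ ≥ c for almost every t ∈ I, the sequence of functions X_p(t) := ⟨β_p(t),v^⊥⟩ / ⟨β_p(t),v⟩ (p ≥ 0) is a martingale with respect to the filtration (Σ_p)_{p≥0} and the measure μ^v, and |X_p(t)| ≤ 1/c for μ^v-almost every t, so in particular ‖X_p‖_{L²(μ^v)} ≤ 1/c for all p ≥ 0. -/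

import Mathlib

open MeasureTheory Filter Metric Set Topology RealInnerProductSpace ENNReal NNReal

noncomputable section

/-- The Euclidean plane. -/
abbrev E2 := EuclideanSpace ℝ (Fin 2)

/-- Rotation of a planar vector by `π/2`. -/
def perp (v : E2) : E2 := (WithLp.equiv 2 (Fin 2 → ℝ)).symm ![-(v 1), v 0]

/-- `IsC1Curve a b γ γ'` : `γ` restricted to the compact nondegenerate interval `[a,b]`
is a C¹ curve with (one-sided at endpoints) derivative `γ'`, continuous and of unit
norm on `[a,b]`. -/
def IsC1Curve (a b : ℝ) (γ γ' : ℝ → E2) : Prop :=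
  a < b ∧ ContinuousOn γ' (Set.Icc a b) ∧
    (∀ t ∈ Set.Icc a b, HasDerivWithinAt γ (γ' t) (Set.Icc a b) t) ∧
    (∀ t ∈ Set.Icc a b, ‖γ' t‖ = 1)

lemma perp_norm (v : E2) : ‖perp v‖ = ‖v‖ := by
  rw [EuclideanSpace.norm_eq, EuclideanSpace.norm_eq]
  congr 1
  simp [perp, Fin.sum_univ_two, WithLp.equiv_symm_apply, PiLp.toLp_apply]
  ring

/-- For a C¹ curve `γ` with `⟨γ'(t),v⟩ ≥ c > 0` on `I = [a,b]`, a
filtration `(Σ_p)` of sub-σ-algebras of the Borel σ-algebra, `β_p = E[γ'|Σ_p]` (w.r.t.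
Lebesgue measure on `I`) and the probability measure
`μ^v(A) = (∫_A ⟨γ',v⟩)/(∫_I ⟨γ',v⟩)`: one has `⟨β_p,v⟩ ≥ c` a.e., the sequence
`X_p = ⟨β_p,v^⊥⟩/⟨β_p,v⟩` is a martingale w.r.t. `(Σ_p)` and `μ^v`, `|X_p| ≤ 1/c`
`μ^v`-a.e., and `‖X_p‖_{L²(μ^v)} ≤ 1/c`. -/
theorem stmt15 (v : E2) (hv : v ∈ sphere (0:E2) 1) (c : ℝ) (hc : 0 < c)
    (a b : ℝ) (γ γ' : ℝ → E2) (hγ : IsC1Curve a b γ γ')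
    (hdir : ∀ t ∈ Set.Icc a b, c ≤ ⟪γ' t, v⟫)
    (ℱ : Filtration ℕ (Real.measurableSpace))
    (β : ℕ → ℝ → E2) (hβ : ∀ p, β p = (volume.restrict (Set.Icc a b))[γ'|ℱ p])
    (μv : Measure ℝ)
    (hμv : μv = (volume.restrict (Set.Icc a b)).withDensity
      (fun t => ENNReal.ofReal (⟪γ' t, v⟫ / ∫ s in Set.Icc a b, ⟪γ' s, v⟫)))
    (X : ℕ → ℝ → ℝ) (hX : ∀ p t, X p t = ⟪β p t, perp v⟫ / ⟪β p t, v⟫) :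
    (∀ p : ℕ, ∀ᵐ t ∂(volume.restrict (Set.Icc a b)), c ≤ ⟪β p t, v⟫) ∧
    (∀ p : ℕ, Integrable (X p) μv) ∧
    Martingale X ℱ μv ∧
    (∀ p : ℕ, ∀ᵐ t ∂μv, |X p t| ≤ 1 / c) ∧
    (∀ p : ℕ, eLpNorm (X p) 2 μv ≤ ENNReal.ofReal (1 / c)) := by
  obtain ⟨hab, hcont, hderiv, hnorm⟩ := hγ
  set μ0 : Measure ℝ := volume.restrict (Set.Icc a b) with hμ0def
  have hImeas : MeasurableSet (Set.Icc a b) := measurableSet_Icc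
  haveI : IsFiniteMeasure μ0 := by
    constructor
    rw [hμ0def, Measure.restrict_apply_univ]
    exact measure_Icc_lt_top
  have hvnorm : ‖v‖ = 1 := by simpa using mem_sphere_zero_iff_norm.mp hv
  have hperp : ‖perp v‖ = 1 := by rw [perp_norm, hvnorm]
  -- notation
  set Z : ℝ := ∫ s in Set.Icc a b, ⟪γ' s, v⟫ with hZdef
  -- integrability of γ' and its inner products
  have hγ'int : Integrable γ' μ0 := hcont.integrableOn_Icc
  have hwcont : ∀ w : E2, ContinuousOn (fun t => ⟪γ' t, w⟫) (Set.Icc a b) :=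
    fun w => hcont.inner continuousOn_const
  have hwint : ∀ w : E2, Integrable (fun t => ⟪γ' t, w⟫) μ0 :=
    fun w => (hwcont w).integrableOn_Icc
  have hgae : ∀ᵐ t ∂μ0, c ≤ ⟪γ' t, v⟫ :=
    (ae_restrict_mem hImeas).mono fun t ht => hdir t ht
  have hgperpae : ∀ᵐ t ∂μ0, |⟪γ' t, perp v⟫| ≤ 1 :=
    (ae_restrict_mem hImeas).mono fun t ht => by
      calc |⟪γ' t, perp v⟫| ≤ ‖γ' t‖ * ‖perp v‖ := abs_real_inner_le_norm _ _
        _ = 1 := by rw [hnorm t ht, hperp, one_mul]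
  -- positivity of Z
  have hZpos : 0 < Z := by
    have h1 : c * (volume (Set.Icc a b)).toReal ≤ Z :=
      setIntegral_ge_of_const_le_real hImeas measure_Icc_lt_top.ne
        (fun t ht => hdir t ht) (hwint v)
    have h2 : (0:ℝ) < (volume (Set.Icc a b)).toReal := by
      rw [Real.volume_Icc, ENNReal.toReal_ofReal (by linarith)]
      linarith
    calc (0:ℝ) < c * (volume (Set.Icc a b)).toReal := by positivity
      _ ≤ Z := h1
  -- measurability and integrability of β
  have hβmeas : ∀ p, StronglyMeasurable[ℱ p] (β p) := fun p => by
    rw [hβ p]; exact stronglyMeasurable_condExp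
  have hβint : ∀ p, Integrable (β p) μ0 := fun p => by
    rw [hβ p]; exact integrable_condExp
  -- conditional expectation commutes with inner product against a fixed vector
  have hcond : ∀ (p : ℕ) (w : E2),
      (fun t => ⟪β p t, w⟫) =ᵐ[μ0] μ0[(fun t => ⟪γ' t, w⟫)|ℱ p] := by
    intro p w
    have hLg : Integrable (fun t => ⟪β p t, w⟫) μ0 := by
      have h := (innerSL ℝ w).integrable_comp (hβint p)
      simp only [innerSL_apply_apply] at h
      refine h.congr (Eventually.of_forall fun t => real_inner_comm _ _)
    refine ae_eq_condExp_of_forall_setIntegral_eq (ℱ.le p) (hwint w)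
      (fun s _ _ => hLg.integrableOn) ?_ ?_
    · intro s hs _
      have h1 : ∫ t in s, ⟪β p t, w⟫ ∂μ0 = ⟪w, ∫ t in s, β p t ∂μ0⟫ := by
        have h := (innerSL ℝ w).integral_comp_comm ((hβint p).integrableOn (s := s))
        simp only [innerSL_apply_apply] at h
        rw [← h]
        exact integral_congr_ae (Eventually.of_forall fun t => real_inner_comm _ _)
      have h2 : ∫ t in s, β p t ∂μ0 = ∫ t in s, γ' t ∂μ0 := by
        simp_rw [hβ p]
        exact setIntegral_condExp (ℱ.le p) hγ'int hs
      have h3 : ∫ t in s, ⟪γ' t, w⟫ ∂μ0 = ⟪w, ∫ t in s, γ' t ∂μ0⟫ := by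
        have h := (innerSL ℝ w).integral_comp_comm (hγ'int.integrableOn (s := s))
        simp only [innerSL_apply_apply] at h
        rw [← h]
        exact integral_congr_ae (Eventually.of_forall fun t => real_inner_comm _ _)
      rw [h1, h2, h3]
    · exact StronglyMeasurable.aestronglyMeasurable
        ((hβmeas p).inner stronglyMeasurable_const)
  -- Part 1 : ⟪β p, v⟫ ≥ c a.e.
  have part1 : ∀ p : ℕ, ∀ᵐ t ∂μ0, c ≤ ⟪β p t, v⟫ := by
    intro p
    have hmono : μ0[(fun _ => c : ℝ → ℝ)|ℱ p] ≤ᵐ[μ0] μ0[(fun t => ⟪γ' t, v⟫)|ℱ p] :=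
      condExp_mono (integrable_const c) (hwint v) hgae
    have hcc : μ0[(fun _ => c : ℝ → ℝ)|ℱ p] = fun _ => c := condExp_const (ℱ.le p) c
    filter_upwards [hmono, (hcond p v)] with t h1 h2
    rw [h2]
    simpa [hcc] using h1
  -- bound on ⟪β p, perp v⟫
  have hnum : ∀ p : ℕ, ∀ᵐ t ∂μ0, |⟪β p t, perp v⟫| ≤ 1 := by
    intro p
    have hbdd : ∀ᵐ t ∂μ0, |(μ0[(fun t => ⟪γ' t, perp v⟫)|ℱ p]) t| ≤ ((1:ℝ≥0):ℝ) :=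
      ae_bdd_condExp_of_ae_bdd (by simpa using hgperpae)
    filter_upwards [hbdd, hcond p (perp v)] with t h1 h2
    rw [h2]; simpa using h1
  -- bound on X p, a.e. μ0
  have hXbdd0 : ∀ p : ℕ, ∀ᵐ t ∂μ0, |X p t| ≤ 1 / c := by
    intro p
    filter_upwards [part1 p, hnum p] with t h1 h2
    rw [hX p t, abs_div, abs_of_pos (lt_of_lt_of_le hc h1)]
    exact div_le_div₀ (by norm_num) h2 hc h1
  -- absolute continuity
  have hac : μv ≪ μ0 := by
    rw [hμv]; exact withDensity_absolutelyContinuous μ0 _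
  have hXbdd : ∀ p : ℕ, ∀ᵐ t ∂μv, |X p t| ≤ 1 / c :=
    fun p => (hXbdd0 p).filter_mono hac.ae_le
  -- μv is a probability measure
  haveI hprob : IsProbabilityMeasure μv := by
    constructor
    rw [hμv, withDensity_apply _ MeasurableSet.univ, Measure.restrict_univ,
      ← ofReal_integral_eq_lintegral_ofReal ((hwint v).div_const Z)
        (hgae.mono fun t ht => div_nonneg (le_trans hc.le ht) hZpos.le)]
    rw [integral_div]
    rw [div_self hZpos.ne', ENNReal.ofReal_one]
  -- measurability of X p
  have hXmeas : ∀ p, StronglyMeasurable[ℱ p] (X p) := by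
    intro p
    have hXp : X p = fun t => ⟪β p t, perp v⟫ / ⟪β p t, v⟫ := funext (hX p)
    rw [hXp]
    exact (((hβmeas p).inner stronglyMeasurable_const).measurable.div
      (((hβmeas p).inner stronglyMeasurable_const).measurable)).stronglyMeasurable
  have hXaesm : ∀ p, AEStronglyMeasurable (X p) μv :=
    fun p => ((hXmeas p).mono (ℱ.le p)).aestronglyMeasurable
  -- integrability of X p w.r.t. μv
  have hXint : ∀ p : ℕ, Integrable (X p) μv := by
    intro p
    refine Integrable.mono' (integrable_const (1/c)) (hXaesm p) ?_
    filter_upwards [hXbdd p] with t ht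
    simpa [Real.norm_eq_abs] using ht
  -- key integral identity
  have hXaesm0 : ∀ p, AEStronglyMeasurable (X p) μ0 :=
    fun p => ((hXmeas p).mono (ℱ.le p)).aestronglyMeasurable
  have hgaem : AEMeasurable (fun t => ⟪γ' t, v⟫) μ0 :=
    ((hwcont v).aemeasurable hImeas)
  have hkey : ∀ p : ℕ, ∀ s : Set ℝ, MeasurableSet[ℱ p] s →
      ∫ t in s, X p t ∂μv = (∫ t in s, ⟪γ' t, perp v⟫ ∂μ0) / Z := by
    intro p s hs
    have sM : MeasurableSet s := ℱ.le p s hs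
    -- rewrite integral over μv as a weighted integral over μ0
    have hres : μv.restrict s = (μ0.restrict s).withDensity
        (fun t => ENNReal.ofReal (⟪γ' t, v⟫ / Z)) := by
      rw [hμv, restrict_withDensity sM]
    have hdens : ∀ t, ENNReal.ofReal (⟪γ' t, v⟫ / Z)
        = ((⟪γ' t, v⟫ / Z).toNNReal : ℝ≥0∞) := fun t => rfl
    have haem : AEMeasurable (fun t => (⟪γ' t, v⟫ / Z).toNNReal) (μ0.restrict s) :=
      (measurable_real_toNNReal.comp_aemeasurable
        ((hgaem.div_const Z).restrict))
    have step1 : ∫ t in s, X p t ∂μv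
        = ∫ t in s, (⟪γ' t, v⟫ / Z).toNNReal • X p t ∂μ0 := by
      rw [show ∫ t in s, X p t ∂μv = ∫ t, X p t ∂(μv.restrict s) from rfl, hres]
      simp_rw [hdens]
      rw [integral_withDensity_eq_integral_smul₀ haem]
    have step2 : ∫ t in s, (⟪γ' t, v⟫ / Z).toNNReal • X p t ∂μ0
        = (∫ t in s, X p t * ⟪γ' t, v⟫ ∂μ0) / Z := by
      rw [← integral_div]
      refine setIntegral_congr_ae sM ?_
      filter_upwards [hgae] with t ht _
      rw [NNReal.smul_def, smul_eq_mul, Real.coe_toNNReal _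
        (div_nonneg (le_trans hc.le ht) hZpos.le)]
      ring
    -- the conditional expectation computation
    have hprodint : Integrable (fun t => X p t * ⟪γ' t, v⟫) μ0 :=
      (hwint v).bdd_mul (hXaesm0 p) (by
        filter_upwards [hXbdd0 p] with t ht
        simpa [Real.norm_eq_abs] using ht)
    have hmul : μ0[(fun t => X p t * ⟪γ' t, v⟫)|ℱ p]
        =ᵐ[μ0] fun t => X p t * (μ0[(fun t => ⟪γ' t, v⟫)|ℱ p]) t := by
      have := condExp_mul_of_stronglyMeasurable_left (μ := μ0) (m := ℱ p) (hXmeas p)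
        (by simpa [Pi.mul_def] using hprodint) (hwint v)
      simpa [Pi.mul_def] using this
    have h3 : ∫ t in s, X p t * ⟪γ' t, v⟫ ∂μ0 = ∫ t in s, ⟪γ' t, perp v⟫ ∂μ0 := by
      rw [← setIntegral_condExp (ℱ.le p) hprodint hs,
        ← setIntegral_condExp (ℱ.le p) (hwint (perp v)) hs]
      have hchain : μ0[(fun t => X p t * ⟪γ' t, v⟫)|ℱ p]
          =ᵐ[μ0] μ0[(fun t => ⟪γ' t, perp v⟫)|ℱ p] := by
        calc μ0[(fun t => X p t * ⟪γ' t, v⟫)|ℱ p]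
            =ᵐ[μ0] fun t => X p t * (μ0[(fun t => ⟪γ' t, v⟫)|ℱ p]) t := hmul
          _ =ᵐ[μ0] fun t => ⟪β p t, perp v⟫ := by
              filter_upwards [hcond p v, part1 p] with t h1 h2
              rw [← h1, hX p t]
              exact div_mul_cancel₀ _ (ne_of_gt (lt_of_lt_of_le hc h2))
          _ =ᵐ[μ0] μ0[(fun t => ⟪γ' t, perp v⟫)|ℱ p] := hcond p (perp v)
      refine setIntegral_congr_ae sM ?_
      filter_upwards [hchain] with t ht _
      exact ht
    rw [step1, step2, h3]
  -- martingale property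
  have hmart : Martingale X ℱ μv := by
    refine ⟨fun p => hXmeas p, fun i j hij => ?_⟩
    refine (ae_eq_condExp_of_forall_setIntegral_eq (ℱ.le i) (hXint j)
      (fun s _ _ => (hXint i).integrableOn) ?_ ?_).symm
    · intro s hs _
      rw [hkey i s hs, hkey j s (ℱ.mono hij s hs)]
    · exact StronglyMeasurable.aestronglyMeasurable (hXmeas i)
  -- L² bound
  have part5 : ∀ p : ℕ, eLpNorm (X p) 2 μv ≤ ENNReal.ofReal (1 / c) := by
    intro p
    have := eLpNorm_le_of_ae_bound (p := 2) (μ := μv) (f := X p)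
      ((hXbdd p).mono fun t ht => by simpa [Real.norm_eq_abs] using ht)
    simpa [measure_univ] using this
  exact ⟨part1, hXint, hmart, hXbdd, part5⟩

end
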